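/- arXiv:1804.01445 — 2 statements merged into one kernel-verified Lean document; each statement's English description precedes it below -/
import Mathlib

section
/- Let q be a positive integer and m, n positive integers with gcd(mn,q)=1. Then Σ⁺_{χ(q)} χ(m)χ̄(n) = (1/2)·( Σ_{v,w: vw=q, w | m−n} μ(v)φ(w) + Σ_{v,w: vw=q, w | m+n} μ(v)φ(w) ). -/
open scoped BigOperators
open Complex

noncomputable section

/-- `e(x) = e^{2πix}`. -/
def e (x : ℝ) : ℂ := Complex.exp (2 * Real.pi * Complex.I * x)

/-- The root number `ε(χ) = q^{-1/2} Σ_{h mod q} χ(h) e(h/q)`. -/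
def rootNumber (q : ℕ) (χ : DirichletCharacter ℂ q) : ℂ :=
  (q : ℂ) ^ (-(1/2 : ℂ)) * ∑ h ∈ Finset.range q, χ (h : ZMod q) * e ((h : ℝ) / q)

/-- The complex-conjugate character `χ̄`. -/
def conjChar (q : ℕ) (χ : DirichletCharacter ℂ q) : DirichletCharacter ℂ q :=
  χ.ringHomComp (starRingEnd ℂ)

/-- `χ` is an even primitive Dirichlet character. -/
def IsEvenPrimitive {q : ℕ} (χ : DirichletCharacter ℂ q) : Prop :=
  χ.conductor = q ∧ χ (-1) = 1

/-- Sum over even primitive characters mod `q`. -/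
def sumEvenPrimitive (q : ℕ) (f : DirichletCharacter ℂ q → ℂ) : ℂ :=
  ∑ᶠ χ ∈ {χ : DirichletCharacter ℂ q | IsEvenPrimitive χ}, f χ

/-- `φ⁺(q)`: the number of even primitive characters mod `q`. -/
def phiPlus (q : ℕ) : ℕ := Nat.card {χ : DirichletCharacter ℂ q // IsEvenPrimitive χ}

/-- The value `L(s,χ)` of the Dirichlet L-function (junk value `0` for modulus `0`). -/
def Lval {q : ℕ} (χ : DirichletCharacter ℂ q) (s : ℂ) : ℂ :=
  if h : q = 0 then 0 else
    haveI : NeZero q := ⟨h⟩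
    DirichletCharacter.LFunction χ s

/-! ### Auxiliary lemmas -/

set_option maxHeartbeats 1000000

namespace EvenPrimitiveAux

open DirichletCharacter Finset

lemma factorsThrough_gcd {q : ℕ} [NeZero q] (χ : DirichletCharacter ℂ q) {d₁ d₂ : ℕ}
    (h1 : χ.FactorsThrough d₁) (h2 : χ.FactorsThrough d₂) :
    χ.FactorsThrough (Nat.gcd d₁ d₂) := by
  have hd1 := h1.dvd
  have hd2 := h2.dvd
  have hg : Nat.gcd d₁ d₂ ∣ q := (Nat.gcd_dvd_left d₁ d₂).trans hd1
  rw [factorsThrough_iff_ker_unitsMap hg]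
  rw [factorsThrough_iff_ker_unitsMap hd1] at h1
  rw [factorsThrough_iff_ker_unitsMap hd2] at h2
  intro u hu
  rw [MonoidHom.mem_ker] at hu
  set a := (u : ZMod q).val with ha
  have hau : ((a : ℕ) : ZMod q) = (u : ZMod q) := ZMod.natCast_rightInverse _
  have haq : Nat.Coprime a q := ZMod.val_coe_unit_coprime u
  -- a ≡ 1 mod gcd
  have hg1 : a ≡ 1 [MOD Nat.gcd d₁ d₂] := by
    have h0 := congrArg (Units.val) hu
    rw [ZMod.unitsMap_def, Units.coe_map] at h0
    simp only [MonoidHom.coe_coe, Units.val_one] at h0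
    have : ((a : ℕ) : ZMod (Nat.gcd d₁ d₂)) = ((1 : ℕ) : ZMod (Nat.gcd d₁ d₂)) := by
      rw [← map_natCast (ZMod.castHom hg (ZMod (Nat.gcd d₁ d₂))) a, hau, h0, Nat.cast_one]
    exact (ZMod.natCast_eq_natCast_iff _ _ _).mp this
  obtain ⟨k, hk1, hk2⟩ := Nat.chineseRemainder' hg1
  -- k is coprime to lcm d₁ d₂
  have hca : Nat.Coprime a d₁ := Nat.Coprime.coprime_dvd_right hd1 haq
  have hc1 : Nat.Coprime k d₁ := by
    have h' : Nat.gcd d₁ k = Nat.gcd d₁ a := by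
      rw [Nat.gcd_rec d₁ k, Nat.gcd_rec d₁ a, (hk1 : k % d₁ = a % d₁)]
    exact Nat.coprime_comm.mp (Nat.coprime_iff_gcd_eq_one.mpr
      (h'.trans (Nat.coprime_iff_gcd_eq_one.mp (Nat.coprime_comm.mpr hca))))
  have hc2 : Nat.Coprime k d₂ := by
    have h' : Nat.gcd d₂ k = Nat.gcd d₂ 1 := by
      rw [Nat.gcd_rec d₂ k, Nat.gcd_rec d₂ 1, (hk2 : k % d₂ = 1 % d₂)]
    exact Nat.coprime_comm.mp (Nat.coprime_iff_gcd_eq_one.mpr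
      (h'.trans (Nat.gcd_one_right d₂)))
  have hkl : Nat.Coprime k (Nat.lcm d₁ d₂) :=
    Nat.Coprime.coprime_dvd_right (Nat.lcm_dvd (dvd_mul_right d₁ d₂) (dvd_mul_left d₂ d₁))
      (hc1.mul_right hc2)
  have hl : Nat.lcm d₁ d₂ ∣ q := Nat.lcm_dvd hd1 hd2
  obtain ⟨v, hv⟩ := ZMod.unitsMap_surjective hl (ZMod.unitOfCoprime k hkl)
  -- compute unitsMap of v at level d₁ and d₂
  have key : ∀ (d : ℕ) (hd : d ∣ q) (hdl : d ∣ Nat.lcm d₁ d₂),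
      ((ZMod.unitsMap hd v : ZMod d)) = ((k : ℕ) : ZMod d) := by
    intro d hd hdl
    have : ZMod.unitsMap hd v = ZMod.unitsMap hdl (ZMod.unitsMap hl v) := by
      rw [← MonoidHom.comp_apply, ZMod.unitsMap_comp]
    rw [this, hv]
    rw [ZMod.unitsMap_def, Units.coe_map]
    simp [ZMod.coe_unitOfCoprime]
  -- χ v = 1 via d₂
  have hv2 : χ.toUnitHom v = 1 := by
    apply h2
    rw [MonoidHom.mem_ker]
    apply Units.ext
    rw [key d₂ hd2 (Nat.dvd_lcm_right d₁ d₂)]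
    rw [show ((k:ℕ) : ZMod d₂) = ((1:ℕ) : ZMod d₂) from (ZMod.natCast_eq_natCast_iff _ _ _).mpr hk2]
    simp
  -- χ (u * v⁻¹) = 1 via d₁
  have hv1 : χ.toUnitHom (u * v⁻¹) = 1 := by
    apply h1
    rw [MonoidHom.mem_ker, map_mul, map_inv]
    have hvk : ZMod.unitsMap hd1 v = ZMod.unitsMap hd1 u := by
      apply Units.ext
      rw [key d₁ hd1 (Nat.dvd_lcm_left d₁ d₂)]
      rw [show ((k:ℕ) : ZMod d₁) = ((a:ℕ) : ZMod d₁) from (ZMod.natCast_eq_natCast_iff _ _ _).mpr hk1]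
      rw [ZMod.unitsMap_def, Units.coe_map]
      simp only [MonoidHom.coe_coe, ZMod.castHom_apply]
      rw [← hau]
      exact (ZMod.cast_natCast hd1 a).symm
    rw [hvk, mul_inv_cancel]
  calc χ.toUnitHom u = χ.toUnitHom (u * v⁻¹) * χ.toUnitHom v := by
        rw [← map_mul]; group
    _ = 1 := by rw [hv1, hv2, one_mul]

lemma conductor_dvd_of_factorsThrough {q : ℕ} [NeZero q] (χ : DirichletCharacter ℂ q) {d : ℕ}
    (h : χ.FactorsThrough d) : χ.conductor ∣ d := by
  have hg : χ.FactorsThrough (Nat.gcd χ.conductor d) :=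
    factorsThrough_gcd χ (factorsThrough_conductor χ) h
  have h1 : χ.conductor ≤ Nat.gcd χ.conductor d := Nat.sInf_le hg
  have h2 : Nat.gcd χ.conductor d ∣ χ.conductor := Nat.gcd_dvd_left _ _
  have hc0 : χ.conductor ≠ 0 := conductor_ne_zero χ
  have : Nat.gcd χ.conductor d = χ.conductor :=
    Nat.le_antisymm (Nat.le_of_dvd (Nat.pos_of_ne_zero hc0) h2) h1
  exact this ▸ Nat.gcd_dvd_right _ _

lemma factorsThrough_iff_conductor_dvd {q : ℕ} [NeZero q] (χ : DirichletCharacter ℂ q) {d : ℕ}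
    (hdq : d ∣ q) : χ.FactorsThrough d ↔ χ.conductor ∣ d := by
  refine ⟨conductor_dvd_of_factorsThrough χ, fun h => ?_⟩
  obtain ⟨hcq, χ₀, hχ₀⟩ := factorsThrough_conductor χ
  exact ⟨hdq, changeLevel h χ₀, by rw [← changeLevel_trans _ h hdq]; exact hχ₀⟩

open scoped Classical in
lemma sum_factorsThrough_eq {q : ℕ} [NeZero q] (a : (ZMod q)ˣ) {w : ℕ} (hw : w ∣ q) :
    ∑ χ ∈ Finset.univ.filter (fun χ : DirichletCharacter ℂ q => χ.FactorsThrough w), χ ↑a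
      = if (ZMod.cast (↑a : ZMod q) : ZMod w) = 1 then (w.totient : ℂ) else 0 := by
  haveI : NeZero w := ⟨fun h => NeZero.ne q (Nat.eq_zero_of_zero_dvd (h ▸ hw))⟩
  rw [← DirichletCharacter.sum_characters_eq ℂ (ZMod.cast (↑a : ZMod q) : ZMod w)]
  refine (Finset.sum_bij (fun (ψ : DirichletCharacter ℂ w) _ => changeLevel hw ψ) ?_ ?_ ?_ ?_).symm
  · intro ψ _
    simp only [mem_filter, mem_univ, true_and]
    exact changeLevel_factorsThrough ψ hw
  · intro ψ₁ _ ψ₂ _ h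
    exact changeLevel_injective hw h
  · intro χ hχ
    obtain ⟨_, ψ, hψ⟩ := (mem_filter.mp hχ).2
    exact ⟨ψ, mem_univ ψ, hψ.symm⟩
  · intro ψ _
    rw [changeLevel_eq_cast_of_dvd ψ hw a]

open scoped Classical in
/-- Sum over all characters mod q with conductor exactly q, via Möbius inversion. -/
lemma sum_primitive_eq {q : ℕ} [NeZero q] (a : (ZMod q)ˣ) :
    ∑ χ ∈ Finset.univ.filter (fun χ : DirichletCharacter ℂ q => χ.conductor = q), χ ↑a
      = ∑ x ∈ q.divisorsAntidiagonal,
          if (ZMod.cast (↑a : ZMod q) : ZMod x.2) = 1 then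
            ((ArithmeticFunction.moebius x.1 : ℤ) : ℂ) * (x.2.totient : ℂ) else 0 := by
  set H : ℕ → ℂ := fun d =>
    ∑ χ ∈ Finset.univ.filter (fun χ : DirichletCharacter ℂ q => χ.conductor = d), χ ↑a with hH
  set g : ℕ → ℂ := fun w => ∑ d ∈ w.divisors, H d with hg
  have hmoeb := (ArithmeticFunction.sum_eq_iff_sum_smul_moebius_eq (f := H) (g := g)).mp
    (fun n _ => rfl) q (Nat.pos_of_ne_zero (NeZero.ne q))
  have hgw : ∀ w, w ∣ q →
      g w = if (ZMod.cast (↑a : ZMod q) : ZMod w) = 1 then (w.totient : ℂ) else 0 := by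
    intro w hw
    have hw0 : w ≠ 0 := fun h => NeZero.ne q (Nat.eq_zero_of_zero_dvd (h ▸ hw))
    rw [← sum_factorsThrough_eq a hw, hg]
    rw [← Finset.sum_fiberwise_of_maps_to (g := fun χ : DirichletCharacter ℂ q => χ.conductor)
      (fun χ hχ => Nat.mem_divisors.mpr ⟨((factorsThrough_iff_conductor_dvd χ hw).mp
        (mem_filter.mp hχ).2), hw0⟩)]
    refine Finset.sum_congr rfl fun d hd => ?_
    rw [hH]
    refine Finset.sum_congr ?_ fun _ _ => rfl
    ext χ
    simp only [mem_filter, mem_univ, true_and]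
    exact ⟨fun h2 => ⟨(factorsThrough_iff_conductor_dvd χ hw).mpr
      (h2 ▸ (Nat.mem_divisors.mp hd).1), h2⟩, fun h => h.2⟩
  have hmoeb' : ∑ x ∈ q.divisorsAntidiagonal, ArithmeticFunction.moebius x.1 • g x.2
      = ∑ χ ∈ Finset.univ.filter (fun χ : DirichletCharacter ℂ q => χ.conductor = q), χ ↑a :=
    hmoeb
  rw [← hmoeb']
  refine Finset.sum_congr rfl fun x hx => ?_
  have hx2 : x.2 ∣ q := ⟨x.1, by rw [← (Nat.mem_divisorsAntidiagonal.mp hx).1, mul_comm]⟩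
  rw [hgw x.2 hx2, zsmul_eq_mul]
  split_ifs <;> simp

lemma conj_apply_unit {q : ℕ} [NeZero q] (χ : DirichletCharacter ℂ q) (u : (ZMod q)ˣ) :
    (starRingEnd ℂ) (χ ↑u) = χ ↑u⁻¹ :=
  calc (starRingEnd ℂ) (χ ↑u) = star (χ (↑u : ZMod q)) := rfl
    _ = χ⁻¹ (↑u : ZMod q) := MulChar.star_apply' χ _
    _ = χ (Ring.inverse (↑u : ZMod q)) := MulChar.inv_apply χ _
    _ = χ ↑u⁻¹ := by rw [Ring.inverse_unit]

lemma cast_unit_val {q w : ℕ} [NeZero q] (hw : w ∣ q) (u : (ZMod q)ˣ) :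
    (ZMod.cast (↑u : ZMod q) : ZMod w) = ↑(ZMod.unitsMap hw u) := by
  rw [ZMod.unitsMap_def, Units.coe_map]
  simp only [MonoidHom.coe_coe, ZMod.castHom_apply]

lemma unitsMap_unitOfCoprime {q w : ℕ} [NeZero q] (hw : w ∣ q) {m : ℕ} (hmq : Nat.Coprime m q) :
    ((ZMod.unitsMap hw (ZMod.unitOfCoprime m hmq)) : ZMod w) = (m : ZMod w) := by
  rw [ZMod.unitsMap_def, Units.coe_map]
  simp only [MonoidHom.coe_coe, ZMod.coe_unitOfCoprime, map_natCast]

lemma cond_sub {q w : ℕ} [NeZero q] (hw : w ∣ q) {m n : ℕ}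
    (hmq : Nat.Coprime m q) (hnq : Nat.Coprime n q) :
    ((ZMod.cast ((↑(ZMod.unitOfCoprime m hmq * (ZMod.unitOfCoprime n hnq)⁻¹) : ZMod q)) : ZMod w)
        = 1) ↔ (w : ℤ) ∣ (m : ℤ) - n := by
  rw [cast_unit_val hw, Units.val_eq_one, map_mul, map_inv, mul_inv_eq_one, Units.ext_iff,
    unitsMap_unitOfCoprime hw hmq, unitsMap_unitOfCoprime hw hnq,
    ZMod.natCast_eq_natCast_iff, Nat.modEq_iff_dvd,
    show ((n : ℤ) - m) = -((m : ℤ) - n) by ring, dvd_neg]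

lemma cond_add {q w : ℕ} [NeZero q] (hw : w ∣ q) {m n : ℕ}
    (hmq : Nat.Coprime m q) (hnq : Nat.Coprime n q) :
    ((ZMod.cast ((↑(-(ZMod.unitOfCoprime m hmq * (ZMod.unitOfCoprime n hnq)⁻¹)) : ZMod q)) : ZMod w)
        = 1) ↔ (w : ℤ) ∣ (m : ℤ) + n := by
  have hval : (ZMod.cast ((↑(-(ZMod.unitOfCoprime m hmq * (ZMod.unitOfCoprime n hnq)⁻¹)) : ZMod q))
        : ZMod w)
      = -(((ZMod.unitsMap hw (ZMod.unitOfCoprime m hmq * (ZMod.unitOfCoprime n hnq)⁻¹))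
          : (ZMod w)ˣ) : ZMod w) := by
    rw [Units.val_neg, show (ZMod.cast (-(↑(ZMod.unitOfCoprime m hmq *
        (ZMod.unitOfCoprime n hnq)⁻¹) : ZMod q)) : ZMod w)
      = ZMod.castHom hw (ZMod w) (-(↑(ZMod.unitOfCoprime m hmq * (ZMod.unitOfCoprime n hnq)⁻¹)
          : ZMod q)) from (ZMod.castHom_apply _).symm, map_neg, neg_inj, ZMod.castHom_apply,
      cast_unit_val hw]
  rw [hval, neg_eq_iff_eq_neg,
    show (-1 : ZMod w) = ((-1 : (ZMod w)ˣ) : ZMod w) by rw [Units.val_neg, Units.val_one],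
    ← Units.ext_iff, map_mul, map_inv, mul_inv_eq_iff_eq_mul, neg_one_mul, Units.ext_iff,
    unitsMap_unitOfCoprime hw hmq, Units.val_neg, unitsMap_unitOfCoprime hw hnq,
    show ((m : ZMod w)) = (((m : ℤ) : ZMod w)) by push_cast; rfl,
    show (-(n : ZMod w)) = (((-(n : ℤ)) : ℤ) : ZMod w) by push_cast; rfl,
    ZMod.intCast_eq_intCast_iff, Int.modEq_iff_dvd,
    show (-(n : ℤ) - m) = -((m : ℤ) + n) by ring, dvd_neg]

end EvenPrimitiveAux

open EvenPrimitiveAux DirichletCharacter Finset in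
/-- Lemma 4.2 (orthogonality for even primitive characters). -/
theorem even_primitive_orthogonality (q : ℕ) (hq : 0 < q) (m n : ℕ)
    (hm : 0 < m) (hn : 0 < n) (h : Nat.Coprime (m * n) q) :
    sumEvenPrimitive q (fun χ => χ (m : ZMod q) * (starRingEnd ℂ) (χ (n : ZMod q))) =
      (1/2 : ℂ) *
        ((∑ p ∈ Nat.divisorsAntidiagonal q,
            if (p.2 : ℤ) ∣ ((m : ℤ) - n) then
              (ArithmeticFunction.moebius p.1 : ℂ) * (Nat.totient p.2 : ℂ) else 0) +
          (∑ p ∈ Nat.divisorsAntidiagonal q,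
            if (p.2 : ℤ) ∣ ((m : ℤ) + n) then
              (ArithmeticFunction.moebius p.1 : ℂ) * (Nat.totient p.2 : ℂ) else 0)) := by
  haveI : NeZero q := ⟨hq.ne'⟩
  classical
  have hmq : Nat.Coprime m q := Nat.Coprime.coprime_dvd_left (dvd_mul_right m n) h
  have hnq : Nat.Coprime n q := Nat.Coprime.coprime_dvd_left (dvd_mul_left n m) h
  have hset : {χ : DirichletCharacter ℂ q | IsEvenPrimitive χ}
      = ↑(Finset.univ.filter (fun χ : DirichletCharacter ℂ q => IsEvenPrimitive χ)) := by
    ext χ; simp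
  rw [sumEvenPrimitive, hset, finsum_mem_coe_finset]
  -- notation
  have hfb : ∀ χ : DirichletCharacter ℂ q,
      χ (m : ZMod q) * (starRingEnd ℂ) (χ (n : ZMod q))
        = χ ↑(ZMod.unitOfCoprime m hmq * (ZMod.unitOfCoprime n hnq)⁻¹) := by
    intro χ
    rw [← ZMod.coe_unitOfCoprime m hmq, ← ZMod.coe_unitOfCoprime n hnq,
      conj_apply_unit χ (ZMod.unitOfCoprime n hnq), ← map_mul, ← Units.val_mul]
  have hminus : ∀ χ : DirichletCharacter ℂ q,
      χ (-1 : ZMod q) * χ ↑(ZMod.unitOfCoprime m hmq * (ZMod.unitOfCoprime n hnq)⁻¹)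
        = χ ↑(-(ZMod.unitOfCoprime m hmq * (ZMod.unitOfCoprime n hnq)⁻¹)) := by
    intro χ
    conv_rhs => rw [Units.val_neg, ← neg_one_mul]
    rw [map_mul]
  have hsplit : ∑ χ ∈ Finset.univ.filter (fun χ : DirichletCharacter ℂ q => IsEvenPrimitive χ),
      (χ (m : ZMod q) * (starRingEnd ℂ) (χ (n : ZMod q)))
      = (1/2 : ℂ) *
        ((∑ χ ∈ Finset.univ.filter (fun χ : DirichletCharacter ℂ q => χ.conductor = q),
            χ ↑(ZMod.unitOfCoprime m hmq * (ZMod.unitOfCoprime n hnq)⁻¹)) +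
         (∑ χ ∈ Finset.univ.filter (fun χ : DirichletCharacter ℂ q => χ.conductor = q),
            χ ↑(-(ZMod.unitOfCoprime m hmq * (ZMod.unitOfCoprime n hnq)⁻¹)))) := by
    rw [← Finset.sum_add_distrib, Finset.mul_sum]
    rw [← Finset.sum_filter_add_sum_filter_not
      (Finset.univ.filter (fun χ : DirichletCharacter ℂ q => χ.conductor = q))
      (fun χ => χ (-1 : ZMod q) = 1)]
    have h2 : ∑ χ ∈ (Finset.univ.filter
          (fun χ : DirichletCharacter ℂ q => χ.conductor = q)).filter
          (fun χ => ¬ χ (-1 : ZMod q) = 1),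
        (1/2 : ℂ) * (χ ↑(ZMod.unitOfCoprime m hmq * (ZMod.unitOfCoprime n hnq)⁻¹)
          + χ ↑(-(ZMod.unitOfCoprime m hmq * (ZMod.unitOfCoprime n hnq)⁻¹))) = 0 := by
      refine Finset.sum_eq_zero fun χ hχ => ?_
      have hne := (Finset.mem_filter.mp hχ).2
      have hsq : χ (-1 : ZMod q) * χ (-1 : ZMod q) = 1 := by
        rw [← map_mul, neg_one_mul, neg_neg, map_one]
      have hneg : χ (-1 : ZMod q) = -1 := (mul_self_eq_one_iff.mp hsq).resolve_left hne
      rw [← hminus χ, hneg]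
      ring
    have h1 : ∑ χ ∈ (Finset.univ.filter
          (fun χ : DirichletCharacter ℂ q => χ.conductor = q)).filter
          (fun χ => χ (-1 : ZMod q) = 1),
        (1/2 : ℂ) * (χ ↑(ZMod.unitOfCoprime m hmq * (ZMod.unitOfCoprime n hnq)⁻¹)
          + χ ↑(-(ZMod.unitOfCoprime m hmq * (ZMod.unitOfCoprime n hnq)⁻¹)))
        = ∑ χ ∈ Finset.univ.filter (fun χ : DirichletCharacter ℂ q => IsEvenPrimitive χ),
            (χ (m : ZMod q) * (starRingEnd ℂ) (χ (n : ZMod q))) := by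
      have hFeq : (Finset.univ.filter
            (fun χ : DirichletCharacter ℂ q => χ.conductor = q)).filter
            (fun χ => χ (-1 : ZMod q) = 1)
          = Finset.univ.filter (fun χ : DirichletCharacter ℂ q => IsEvenPrimitive χ) := by
        ext χ
        rw [Finset.mem_filter, Finset.mem_filter, Finset.mem_filter]
        simp [IsEvenPrimitive, Finset.mem_filter, and_assoc]
      rw [hFeq]
      refine Finset.sum_congr rfl fun χ hχ => ?_
      have he : χ (-1 : ZMod q) = 1 := ((Finset.mem_filter.mp hχ).2).2
      rw [hfb χ, ← hminus χ, he, one_mul]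
      ring
    rw [h1, h2, add_zero]
  rw [hsplit]
  congr 1
  congr 1
  · rw [sum_primitive_eq]
    refine Finset.sum_congr rfl fun x hx => ?_
    have hx2 : x.2 ∣ q := ⟨x.1, by rw [← (Nat.mem_divisorsAntidiagonal.mp hx).1, mul_comm]⟩
    exact if_congr (cond_sub hx2 hmq hnq) rfl rfl
  · rw [sum_primitive_eq]
    refine Finset.sum_congr rfl fun x hx => ?_
    have hx2 : x.2 ∣ q := ⟨x.1, by rw [← (Nat.mem_divisorsAntidiagonal.mp hx).1, mul_comm]⟩
    exact if_congr (cond_add hx2 hmq hnq) rfl rfl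
end
end

section
/- Let P be a real polynomial. There exists a constant C = C(P) such that for all real y ≥ 2, | Σ_{b ≤ y} (Λ(b)/b)·P(log(y/b)/log y) − (log y)·∫₀¹ P(u) du | ≤ C. -/
open scoped BigOperators

noncomputable section

open Finset ArithmeticFunction Real Nat MeasureTheory


/-- log of factorial as a sum -/
lemma Tsum_eq (N : ℕ) : ∑ n ∈ Icc 1 N, Real.log n = Real.log (N !) := by
  rw [← Real.log_prod (s := Icc 1 N) (f := fun n : ℕ => (n:ℝ)) (fun n hn => by
    have : 1 ≤ n := (mem_Icc.mp hn).1
    positivity)]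
  congr 1
  rw [← Nat.cast_prod]
  congr 1
  rw [← Finset.Ico_add_one_right_eq_Icc]
  exact Finset.prod_Ico_id_eq_factorial N

/-- Dirichlet hyperbola identity: log N! = Σ_{d≤N} Λ(d) ⌊N/d⌋ -/
lemma T_identity (N : ℕ) :
    Real.log (N !) = ∑ d ∈ Icc 1 N, Λ d * (N / d : ℕ) := by
  rw [← Tsum_eq]
  have h1 : ∀ n ∈ Icc 1 N, Real.log n = ∑ d ∈ n.divisors, Λ d := by
    intro n hn
    exact (ArithmeticFunction.vonMangoldt_sum).symm
  rw [Finset.sum_congr rfl h1]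
  have h2 : ∀ n ∈ Icc 1 N, n.divisors = {d ∈ Icc 1 N | d ∣ n} := by
    intro n hn
    obtain ⟨h1n, hnN⟩ := mem_Icc.mp hn
    ext d
    simp only [Nat.mem_divisors, mem_filter, mem_Icc]
    constructor
    · rintro ⟨hd, hn0⟩
      exact ⟨⟨Nat.one_le_iff_ne_zero.mpr (fun h => by simp [h] at hd; omega),
        le_trans (Nat.le_of_dvd (by omega) hd) hnN⟩, hd⟩
    · rintro ⟨_, hd⟩
      exact ⟨hd, by omega⟩
  rw [Finset.sum_congr rfl (fun n hn => by rw [h2 n hn, Finset.sum_filter])]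
  rw [Finset.sum_comm]
  refine Finset.sum_congr rfl fun d hd => ?_
  rw [← Finset.sum_filter]
  rw [Finset.sum_const, nsmul_eq_mul, mul_comm]
  congr 1
  have : (Icc 1 N) = Ioc 0 N := by rw [← Finset.Icc_add_one_left_eq_Ioc]; rfl
  rw [this, Nat.Ioc_filter_dvd_card_eq_div]

lemma choose_le_two_pow' (n k : ℕ) : n.choose k ≤ 2 ^ n := by
  rcases le_or_gt k n with h | h
  · calc n.choose k ≤ ∑ m ∈ range (n+1), n.choose m :=
        Finset.single_le_sum (fun i _ => Nat.zero_le _) (mem_range.mpr (by omega))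
    _ = 2 ^ n := Nat.sum_range_choose n
  · rw [Nat.choose_eq_zero_of_lt h]; exact Nat.zero_le _

/-- N! ≤ (N+1) * 2^N * (M!)^2 where M = N/2 -/
lemma factorial_le_key (N : ℕ) : N ! ≤ (N + 1) * 2 ^ N * ((N / 2)! * (N / 2)!) := by
  set M := N / 2 with hM
  have h2M : 2 * M ≤ N := by omega
  have hN : N ≤ 2 * M + 1 := by omega
  have hfact : (2 * M)! = (2 * M).choose M * (M ! * M !) := by
    have := Nat.choose_mul_factorial_mul_factorial (show M ≤ 2 * M by omega)
    rw [show 2 * M - M = M by omega] at this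
    rw [← this]; ring
  have hcb : (2 * M).choose M ≤ 2 ^ N := le_trans (choose_le_two_pow' _ _)
    (Nat.pow_le_pow_right (by norm_num) h2M)
  calc N ! ≤ (2 * M + 1)! := Nat.factorial_le hN
    _ = (2 * M + 1) * (2 * M)! := rfl
    _ = (2 * M + 1) * ((2 * M).choose M * (M ! * M !)) := by rw [hfact]
    _ ≤ (N + 1) * (2 ^ N * (M ! * M !)) := by
        apply Nat.mul_le_mul (by omega) (Nat.mul_le_mul_right _ hcb)
    _ = (N + 1) * 2 ^ N * (M ! * M !) := by ring

/-- T N - 2 T (N/2) ≤ 2N for N ≥ 1 -/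
lemma T_sub_le (N : ℕ) (hN : 1 ≤ N) :
    Real.log (N !) - 2 * Real.log ((N / 2)!) ≤ 2 * N := by
  set M := N / 2
  have h1 : (0:ℝ) < N ! := by exact_mod_cast Nat.factorial_pos N
  have h2 : (0:ℝ) < M ! := by exact_mod_cast Nat.factorial_pos M
  have key : (N ! : ℝ) ≤ (N + 1) * 2 ^ N * (M ! * M !) := by
    exact_mod_cast factorial_le_key N
  have hlog := Real.log_le_log h1 key
  rw [Real.log_mul (by positivity) (by positivity),
    Real.log_mul (by positivity) (by positivity),
    Real.log_mul (by positivity) (by positivity), Real.log_pow] at hlog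
  have hl1 : Real.log (N + 1) ≤ N := by
    have := Real.log_le_sub_one_of_pos (show (0:ℝ) < N + 1 by positivity)
    have hN1 : (1:ℝ) ≤ N := by exact_mod_cast hN
    linarith
  have hl2 : Real.log 2 ≤ 1 := by
    have := Real.log_le_sub_one_of_pos (show (0:ℝ) < 2 by norm_num); linarith
  have hN0 : (0:ℝ) ≤ N := by positivity
  nlinarith [Real.log_nonneg (show (1:ℝ) ≤ 2 by norm_num)]

/-- Chebyshev-type bound: ψ(N) ≤ 4N -/
lemma psi_le (N : ℕ) : ∑ d ∈ Icc 1 N, Λ d ≤ 4 * N := by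
  induction N using Nat.strong_induction_on with
  | _ N ih =>
    rcases Nat.eq_zero_or_pos N with rfl | hN
    · simp
    set M := N / 2 with hM
    have hMN : M < N := Nat.div_lt_self hN (by norm_num)
    have hM_le : M ≤ N := hMN.le
    have ihM := ih M hMN
    -- coefficient function
    have key : ∑ d ∈ Ioc M N, Λ d ≤ Real.log (N !) - 2 * Real.log (M !) := by
      have hTM : Real.log (M !) = ∑ d ∈ Icc 1 N, Λ d * (M / d : ℕ) := by
        rw [T_identity M]
        apply Finset.sum_subset (Finset.Icc_subset_Icc_right hM_le)
        intro d hd hd'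
        simp only [mem_Icc] at hd hd'
        have : M < d := by omega
        rw [Nat.div_eq_of_lt this]
        simp
      rw [T_identity N, hTM, Finset.mul_sum, ← Finset.sum_sub_distrib]
      have expand : ∀ d : ℕ, Λ d * ↑(N / d) - 2 * (Λ d * ↑(M / d))
          = Λ d * ((N / d : ℕ) - 2 * (M / d : ℕ) : ℝ) := by intro d; ring
      simp_rw [expand]
      rw [show (Icc 1 N) = Ioc 0 N from (Finset.Icc_add_one_left_eq_Ioc 0 N),
        ← Finset.sum_Ioc_consecutive _ (Nat.zero_le M) hM_le,
        show (Ioc 0 M) = Icc 1 M from (Finset.Icc_add_one_left_eq_Ioc 0 M).symm]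
      have h1 : (0:ℝ) ≤ ∑ d ∈ Icc 1 M, Λ d * ((N / d : ℕ) - 2 * (M / d : ℕ) : ℝ) := by
        apply Finset.sum_nonneg
        intro d hd
        apply mul_nonneg ArithmeticFunction.vonMangoldt_nonneg
        have : 2 * (M / d) ≤ N / d := by
          have h1 : M / d = N / (2 * d) := by
            rw [hM, Nat.div_div_eq_div_mul, mul_comm]
          have h2 : N / (2 * d) = N / d / 2 := by
            rw [Nat.div_div_eq_div_mul, mul_comm]
          rw [h1, h2]
          omega
        rw [sub_nonneg]
        exact_mod_cast this
      have h2 : ∑ d ∈ Ioc M N, Λ d ≤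
          ∑ d ∈ Ioc M N, Λ d * ((N / d : ℕ) - 2 * (M / d : ℕ) : ℝ) := by
        apply Finset.sum_le_sum
        intro d hd
        simp only [mem_Ioc] at hd
        have hNd : N / d = 1 := by
          have : N < 2 * d := by omega
          have h1 : N / d < 2 := Nat.div_lt_of_lt_mul (by omega)
          have h2 : 1 ≤ N / d := (Nat.one_le_div_iff (by omega)).mpr hd.2
          omega
        have hMd : M / d = 0 := Nat.div_eq_of_lt (by omega)
        rw [hNd, hMd]
        simp only [Nat.cast_one, Nat.cast_zero, mul_zero, sub_zero, mul_one]
        exact le_refl _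
      linarith
    have hTsub := T_sub_le N hN
    have hsplit2 : ∑ d ∈ Icc 1 N, Λ d = ∑ d ∈ Icc 1 M, Λ d + ∑ d ∈ Ioc M N, Λ d := by
      rw [show (Icc 1 N) = Ioc 0 N from (Finset.Icc_add_one_left_eq_Ioc 0 N),
        ← Finset.sum_Ioc_consecutive _ (Nat.zero_le M) hM_le,
        show (Ioc 0 M) = Icc 1 M from (Finset.Icc_add_one_left_eq_Ioc 0 M).symm]
    have hMcast : (M : ℝ) ≤ (N : ℝ) / 2 := by
      rw [hM]
      exact_mod_cast Nat.cast_div_le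
    push_cast at hMcast ⊢
    linarith
lemma mertens_nat (N : ℕ) (h : 1 ≤ N) :
    |(∑ b ∈ Icc 1 N, Λ b / b) - Real.log N| ≤ 4 := by
  have hN0 : (0:ℝ) < N := by exact_mod_cast h
  have key1 : Real.log (N !) ≤ (N:ℝ) * ∑ b ∈ Icc 1 N, Λ b / b := by
    rw [T_identity N, Finset.mul_sum]
    apply Finset.sum_le_sum
    intro b hb
    have hb1 : 1 ≤ b := (mem_Icc.mp hb).1
    have hc : ((N / b : ℕ):ℝ) ≤ (N:ℝ)/b := Nat.cast_div_le
    calc Λ b * ((N/b : ℕ):ℝ) ≤ Λ b * ((N:ℝ)/b) :=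
          mul_le_mul_of_nonneg_left hc ArithmeticFunction.vonMangoldt_nonneg
      _ = (N:ℝ) * (Λ b / b) := by ring
  have key2 : (N:ℝ) * ∑ b ∈ Icc 1 N, Λ b / b ≤ Real.log (N !) + 4 * N := by
    have hψ := psi_le N
    have : (N:ℝ) * ∑ b ∈ Icc 1 N, Λ b / b
        ≤ ∑ b ∈ Icc 1 N, (Λ b * ((N/b : ℕ):ℝ) + Λ b) := by
      rw [Finset.mul_sum]
      apply Finset.sum_le_sum
      intro b hb
      have hb1 : 1 ≤ b := (mem_Icc.mp hb).1
      have hbpos : (0:ℝ) < b := by exact_mod_cast hb1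
      have hlt : (N:ℝ)/b ≤ ((N/b : ℕ):ℝ) + 1 := by
        rw [div_le_iff₀ hbpos]
        have : N ≤ (N/b + 1) * b := by
          have h := Nat.div_add_mod N b
          have h2 := Nat.mod_lt N (show 0 < b by omega)
          nlinarith
        calc (N:ℝ) ≤ ((N/b + 1) * b : ℕ) := by exact_mod_cast this
          _ = (((N/b:ℕ):ℝ) + 1) * b := by push_cast; ring
      calc (N:ℝ) * (Λ b / b) = Λ b * ((N:ℝ)/b) := by ring
        _ ≤ Λ b * (((N/b : ℕ):ℝ) + 1) :=
            mul_le_mul_of_nonneg_left hlt ArithmeticFunction.vonMangoldt_nonneg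
        _ = Λ b * ((N/b : ℕ):ℝ) + Λ b := by ring
    rw [Finset.sum_add_distrib] at this
    rw [T_identity N]
    linarith
  have hT_up : Real.log (N !) ≤ (N:ℝ) * Real.log N := by
    rw [← Tsum_eq]
    calc ∑ n ∈ Icc 1 N, Real.log n ≤ ∑ n ∈ Icc 1 N, Real.log N := by
          apply Finset.sum_le_sum
          intro n hn
          obtain ⟨h1, h2⟩ := mem_Icc.mp hn
          exact Real.log_le_log (by exact_mod_cast h1) (by exact_mod_cast h2)
      _ = (N:ℝ) * Real.log N := by
          rw [Finset.sum_const, Nat.card_Icc, nsmul_eq_mul]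
          simp
  have hT_lo : (N:ℝ) * Real.log N - N ≤ Real.log (N !) := by
    have hexp := Real.sum_le_exp_of_nonneg (Nat.cast_nonneg N) (N+1)
    have h1 : (N:ℝ)^N / (N ! : ℝ) ≤ Real.exp N := by
      refine le_trans ?_ hexp
      exact Finset.single_le_sum (f := fun i => (N:ℝ)^i / (i ! : ℝ))
        (fun i _ => by positivity) (mem_range.mpr (by omega))
    have hfac : (0:ℝ) < (N ! : ℝ) := by exact_mod_cast Nat.factorial_pos N
    rw [div_le_iff₀ hfac] at h1
    have h2 := Real.log_le_log (by positivity) h1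
    rw [Real.log_pow, Real.log_mul (Real.exp_ne_zero _) (ne_of_gt hfac),
      Real.log_exp] at h2
    linarith
  rw [abs_le]
  constructor
  · nlinarith
  · nlinarith

lemma mertens_real (t : ℝ) (ht : 1 ≤ t) :
    |(∑ b ∈ Icc 0 ⌊t⌋₊, Λ b / b) - Real.log t| ≤ 5 := by
  have hN1 : 1 ≤ ⌊t⌋₊ := Nat.one_le_floor_iff t |>.mpr ht
  set N := ⌊t⌋₊ with hN
  have hsum : ∑ b ∈ Icc 0 N, Λ b / (b:ℝ) = ∑ b ∈ Icc 1 N, Λ b / b := by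
    rw [Finset.Icc_eq_cons_Ioc (Nat.zero_le N), Finset.sum_cons,
      show (Ioc 0 N) = Icc 1 N from (Finset.Icc_add_one_left_eq_Ioc 0 N).symm]
    simp
  rw [hsum]
  have hmn := mertens_nat N hN1
  have hNt : (N:ℝ) ≤ t := Nat.floor_le (by linarith)
  have hNpos : (0:ℝ) < N := by exact_mod_cast hN1
  have htlt : t < N + 1 := Nat.lt_floor_add_one t
  have hlog1 : Real.log N ≤ Real.log t := Real.log_le_log hNpos hNt
  have hlog2 : Real.log t ≤ Real.log N + 1 := by
    have h2N : t ≤ 2 * N := by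
      have : (1:ℝ) ≤ N := by exact_mod_cast hN1
      linarith
    calc Real.log t ≤ Real.log (2 * N) := Real.log_le_log (by linarith) h2N
      _ = Real.log 2 + Real.log N := Real.log_mul (by norm_num) (ne_of_gt hNpos)
      _ ≤ Real.log N + 1 := by
          have := Real.log_le_sub_one_of_pos (show (0:ℝ) < 2 by norm_num)
          linarith
  rw [abs_le] at hmn ⊢
  constructor <;> linarith

lemma Sk_succ (k : ℕ) (y : ℝ) (hy : 2 ≤ y) :
    |(∑ b ∈ Icc 1 ⌊y⌋₊, (Λ b / b) * (Real.log (y/b))^(k+1)) -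
      (Real.log y)^(k+2)/((k:ℝ)+2)| ≤ 5 * (Real.log y)^(k+1) := by
  have hy1 : (1:ℝ) ≤ y := by linarith
  have hy0 : (0:ℝ) < y := by linarith
  set L := Real.log y with hL
  have hL0 : 0 < L := Real.log_pos (by linarith)
  set c : ℕ → ℝ := fun b => Λ b / b with hc
  have hc0 : c 0 = 0 := by simp [hc]
  set f : ℝ → ℝ := fun t => (L - Real.log t)^(k+1) with hf
  set g : ℝ → ℝ := fun t => ((k:ℝ)+1) * (L - Real.log t)^k / t with hg
  set A : ℝ → ℝ := fun t => ∑ b ∈ Icc 0 ⌊t⌋₊, c b with hA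
  -- derivative of f
  have hderiv : ∀ t : ℝ, 0 < t → HasDerivAt f (-(g t)) t := by
    intro t ht
    have h1 : HasDerivAt (fun t => L - Real.log t) (-t⁻¹) t :=
      (Real.hasDerivAt_log ht.ne').const_sub L
    have h2 := h1.fun_pow (k+1)
    refine h2.congr_deriv ?_
    simp only [hg]
    push_cast
    field_simp
  have hf_diff : ∀ t ∈ Set.Icc (1:ℝ) y, DifferentiableAt ℝ f t :=
    fun t ht => (hderiv t (by linarith [ht.1])).differentiableAt
  have hderiv_eq : ∀ t : ℝ, 0 < t → deriv f t = -(g t) :=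
    fun t ht => (hderiv t ht).deriv
  have hlogc : ContinuousOn Real.log (Set.Icc 1 y) :=
    Real.continuousOn_log.mono (fun x hx => by
      simp only [Set.mem_compl_iff, Set.mem_singleton_iff]
      have := hx.1; intro h; rw [h] at this; linarith)
  have hgc : ContinuousOn g (Set.Icc 1 y) := by
    apply ContinuousOn.div
    · exact continuousOn_const.mul ((continuousOn_const.sub hlogc).pow k)
    · exact continuousOn_id
    · intro x hx; have h1 := hx.1; intro h; rw [h] at h1; linarith
  have hf_int : IntegrableOn (deriv f) (Set.Icc 1 y) := by
    apply (hgc.neg.integrableOn_Icc).congr_fun ?_ measurableSet_Icc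
    intro t ht
    exact (hderiv_eq t (by linarith [ht.1])).symm
  have habel := sum_mul_eq_sub_integral_mul₀ c hc0 y hf_diff hf_int
  -- LHS transform
  have hLHS : ∑ b ∈ Icc 0 ⌊y⌋₊, f b * c b
      = ∑ b ∈ Icc 1 ⌊y⌋₊, (Λ b / b) * (Real.log (y/b))^(k+1) := by
    rw [Finset.Icc_eq_cons_Ioc (Nat.zero_le _), Finset.sum_cons,
      show (Ioc 0 ⌊y⌋₊) = Icc 1 ⌊y⌋₊ from (Finset.Icc_add_one_left_eq_Ioc 0 ⌊y⌋₊).symm,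
      hc0, mul_zero, zero_add]
    refine Finset.sum_congr rfl fun b hb => ?_
    have hb1 : 1 ≤ b := (mem_Icc.mp hb).1
    have hb0 : (0:ℝ) < b := by exact_mod_cast hb1
    rw [mul_comm]
    congr 2
    rw [Real.log_div (ne_of_gt hy0) (ne_of_gt hb0)]
  have hfy : f y = 0 := by simp [hf, hL]
  rw [hLHS, hfy, zero_mul, zero_sub] at habel
  -- rewrite the integral
  have hintg : ∫ t in Set.Ioc 1 y, deriv f t * (∑ b ∈ Icc 0 ⌊t⌋₊, c b)
      = ∫ t in Set.Ioc 1 y, -(g t * A t) := by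
    apply setIntegral_congr_fun measurableSet_Ioc
    intro t ht
    show deriv f t * A t = -(g t * A t)
    rw [hderiv_eq t (by linarith [ht.1])]
    ring
  rw [hintg, MeasureTheory.integral_neg, neg_neg] at habel
  -- now habel : ∑ = ∫ t in Ioc 1 y, g t * A t
  -- integral computations
  have hI2 : ∫ t in Set.Ioc 1 y, g t = L^(k+1) := by
    rw [← intervalIntegral.integral_of_le hy1]
    have : ∀ t ∈ Set.uIcc (1:ℝ) y, HasDerivAt (fun t => -(L - Real.log t)^(k+1)) (g t) t := by
      intro t ht
      rw [Set.uIcc_of_le hy1] at ht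
      have := (hderiv t (by linarith [ht.1])).neg
      rw [neg_neg] at this; exact this
    rw [intervalIntegral.integral_eq_sub_of_hasDerivAt this
      ((hgc.mono (by rw [Set.uIcc_of_le hy1])).intervalIntegrable)]
    simp [hL]
  have hI1 : ∫ t in Set.Ioc 1 y, g t * Real.log t = L^(k+2)/((k:ℝ)+2) := by
    rw [← intervalIntegral.integral_of_le hy1]
    have key : ∀ t ∈ Set.uIcc (1:ℝ) y,
        HasDerivAt (fun t => -((L - Real.log t)^(k+1) * Real.log t)
          - (L - Real.log t)^(k+2)/((k:ℝ)+2)) (g t * Real.log t) t := by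
      intro t ht
      rw [Set.uIcc_of_le hy1] at ht
      have ht0 : (0:ℝ) < t := by linarith [ht.1]
      have h1 : HasDerivAt (fun t => L - Real.log t) (-t⁻¹) t :=
        (Real.hasDerivAt_log ht0.ne').const_sub L
      have h2 := (h1.fun_pow (k+1)).mul (Real.hasDerivAt_log ht0.ne')
      have h3 := (h1.fun_pow (k+2)).div_const ((k:ℝ)+2)
      have h4 := (h2.neg).sub h3
      refine h4.congr_deriv ?_
      have hk2 : ((k:ℝ)+2) ≠ 0 := by positivity
      simp only [hg]
      push_cast
      field_simp
      ring
    rw [intervalIntegral.integral_eq_sub_of_hasDerivAt key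
      ((hgc.mul hlogc).mono (by rw [Set.uIcc_of_le hy1]) |>.intervalIntegrable)]
    simp [hL]
  -- integrability of g * A
  have hA_meas : Measurable A := by
    have : A = (fun n : ℕ => ∑ b ∈ Icc 0 n, c b) ∘ Nat.floor := rfl
    rw [this]
    exact measurable_from_top.comp Nat.measurable_floor
  have hg_meas : Measurable g := by
    apply Measurable.div
    · exact ((measurable_const.sub Real.measurable_log).pow_const k).const_mul _
    · exact measurable_id
  have hA_nonneg : ∀ t, 0 ≤ A t :=
    fun t => Finset.sum_nonneg fun b _ =>
      div_nonneg ArithmeticFunction.vonMangoldt_nonneg (Nat.cast_nonneg b)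
  have hA_mono : ∀ t ∈ Set.Ioc (1:ℝ) y, A t ≤ A y := by
    intro t ht
    apply Finset.sum_le_sum_of_subset_of_nonneg
    · exact Finset.Icc_subset_Icc_right (Nat.floor_le_floor ht.2)
    · intro b _ _
      exact div_nonneg ArithmeticFunction.vonMangoldt_nonneg (Nat.cast_nonneg b)
  have hg_nonneg : ∀ t ∈ Set.Ioc (1:ℝ) y, 0 ≤ g t := by
    intro t ht
    have ht1 : (1:ℝ) ≤ t := ht.1.le
    have hlt : Real.log t ≤ L := Real.log_le_log (by linarith) ht.2
    simp only [hg]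
    have : (0:ℝ) ≤ L - Real.log t := by linarith
    positivity
  have hg_le : ∀ t ∈ Set.Ioc (1:ℝ) y, g t ≤ ((k:ℝ)+1) * L^k := by
    intro t ht
    have ht1 : (1:ℝ) ≤ t := ht.1.le
    have hlt : Real.log t ≤ L := Real.log_le_log (by linarith) ht.2
    have hl0 : 0 ≤ Real.log t := Real.log_nonneg ht1
    simp only [hg]
    rw [div_le_iff₀ (by linarith)]
    have h1 : (L - Real.log t)^k ≤ L^k := by
      apply pow_le_pow_left₀ (by linarith) (by linarith)
    have hLk : (0:ℝ) ≤ ((k:ℝ)+1) * L^k :=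
      mul_nonneg (by positivity) (pow_nonneg hL0.le k)
    calc ((k:ℝ)+1) * (L - Real.log t)^k ≤ ((k:ℝ)+1) * L^k :=
          mul_le_mul_of_nonneg_left h1 (by positivity)
      _ = ((k:ℝ)+1) * L^k * 1 := by ring
      _ ≤ ((k:ℝ)+1) * L^k * t := by
          exact mul_le_mul_of_nonneg_left ht1 hLk
  have hInt_gA : IntegrableOn (fun t => g t * A t) (Set.Ioc 1 y) := by
    apply Integrable.mono' (g := fun _ => ((k:ℝ)+1) * L^k * A y)
      (integrableOn_const measure_Ioc_lt_top.ne)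
      ((hg_meas.mul hA_meas).aestronglyMeasurable)
    rw [ae_restrict_iff' measurableSet_Ioc]
    apply ae_of_all
    intro t ht
    rw [Real.norm_eq_abs, Pi.mul_apply, abs_of_nonneg (mul_nonneg (hg_nonneg t ht) (hA_nonneg t))]
    apply mul_le_mul (hg_le t ht) (hA_mono t ht) (hA_nonneg t)
    positivity
  have hInt_glog : IntegrableOn (fun t => g t * Real.log t) (Set.Ioc 1 y) :=
    ((hgc.mul hlogc).integrableOn_Icc).mono_set Set.Ioc_subset_Icc_self
  have hInt_g : IntegrableOn g (Set.Ioc 1 y) :=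
    (hgc.integrableOn_Icc).mono_set Set.Ioc_subset_Icc_self
  -- final bound
  rw [habel, ← hI1]
  rw [← MeasureTheory.integral_sub hInt_gA hInt_glog]
  have hbound : ‖∫ t in Set.Ioc 1 y, (g t * A t - g t * Real.log t)‖
      ≤ ∫ t in Set.Ioc 1 y, 5 * g t := by
    apply MeasureTheory.norm_integral_le_of_norm_le (hInt_g.const_mul 5)
    rw [ae_restrict_iff' measurableSet_Ioc]
    apply ae_of_all
    intro t ht
    rw [Real.norm_eq_abs]
    have : g t * A t - g t * Real.log t = g t * (A t - Real.log t) := by ring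
    rw [this, abs_mul, abs_of_nonneg (hg_nonneg t ht)]
    have hm : |A t - Real.log t| ≤ 5 := mertens_real t ht.1.le
    calc g t * |A t - Real.log t| ≤ g t * 5 :=
          mul_le_mul_of_nonneg_left hm (hg_nonneg t ht)
      _ = 5 * g t := by ring
  rw [MeasureTheory.integral_const_mul, hI2] at hbound
  rw [← Real.norm_eq_abs]
  exact hbound
lemma Sk_all (k : ℕ) (y : ℝ) (hy : 2 ≤ y) :
    |(∑ b ∈ Icc 1 ⌊y⌋₊, (Λ b / b) * (Real.log (y/b))^k) -
      (Real.log y)^(k+1)/((k:ℝ)+1)| ≤ 5 * (Real.log y)^k := by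
  cases k with
  | zero =>
    simp only [pow_zero, mul_one, pow_one, Nat.cast_zero, zero_add, div_one]
    have h := mertens_real y (by linarith)
    have hsum : ∑ b ∈ Icc 0 ⌊y⌋₊, Λ b / (b:ℝ) = ∑ b ∈ Icc 1 ⌊y⌋₊, Λ b / b := by
      rw [Finset.Icc_eq_cons_Ioc (Nat.zero_le _), Finset.sum_cons,
        show (Ioc 0 ⌊y⌋₊) = Icc 1 ⌊y⌋₊ from (Finset.Icc_add_one_left_eq_Ioc 0 ⌊y⌋₊).symm]
      simp
    rw [hsum] at h
    linarith [h]
  | succ k =>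
    have h := Sk_succ k y hy
    convert h using 3
    push_cast
    ring

lemma Sk_norm (k : ℕ) (y : ℝ) (hy : 2 ≤ y) :
    |(∑ b ∈ Icc 1 ⌊y⌋₊, (Λ b / b) * (Real.log (y/b) / Real.log y)^k) -
      Real.log y/((k:ℝ)+1)| ≤ 5 := by
  set L := Real.log y with hL
  have hL0 : 0 < L := Real.log_pos (by linarith)
  have hLk : (0:ℝ) < L^k := pow_pos hL0 k
  have h1 : ∑ b ∈ Icc 1 ⌊y⌋₊, (Λ b / b) * (Real.log (y/b) / L)^k
      = (∑ b ∈ Icc 1 ⌊y⌋₊, (Λ b / b) * (Real.log (y/b))^k) / L^k := by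
    rw [Finset.sum_div]
    refine Finset.sum_congr rfl fun b _ => ?_
    rw [div_pow, mul_div_assoc]
  have h2 : L/((k:ℝ)+1) = (L^(k+1)/((k:ℝ)+1)) / L^k := by
    rw [pow_succ]
    field_simp
  rw [h1, h2, div_sub_div_same, abs_div, abs_of_pos hLk,
    div_le_iff₀ hLk]
  calc |(∑ b ∈ Icc 1 ⌊y⌋₊, (Λ b / b) * (Real.log (y/b))^k) - L^(k+1)/((k:ℝ)+1)|
      ≤ 5 * L^k := Sk_all k y hy
    _ = 5 * L^k := rfl
/-- `Σ_{b ≤ y} (Λ(b)/b) P(log(y/b)/log y) = (log y) ∫₀¹ P(u) du + O(1)`. -/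
theorem vonMangoldt_weighted_sum (P : Polynomial ℝ) :
    ∃ C : ℝ, ∀ y : ℝ, 2 ≤ y →
      |(∑ b ∈ Finset.Icc 1 (Nat.floor y),
          (ArithmeticFunction.vonMangoldt b / b) * P.eval (Real.log (y / b) / Real.log y)) -
        Real.log y * ∫ u in (0:ℝ)..1, P.eval u| ≤ C := by
  set n := P.natDegree with hn
  refine ⟨∑ j ∈ range (n+1), |P.coeff j| * 5, fun y hy => ?_⟩
  set L := Real.log y with hL
  have hL0 : 0 < L := Real.log_pos (by linarith)
  -- integral of P
  have hint : ∫ u in (0:ℝ)..1, P.eval u = ∑ j ∈ range (n+1), P.coeff j / ((j:ℝ)+1) := by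
    have : ∀ u : ℝ, P.eval u = ∑ j ∈ range (n+1), P.coeff j * u^j := fun u =>
      Polynomial.eval_eq_sum_range (p := P) u
    rw [intervalIntegral.integral_congr (fun u _ => this u)]
    rw [intervalIntegral.integral_finset_sum (f := fun j (u : ℝ) => P.coeff j * u^j) (fun j _ =>
      ((continuous_const.mul (continuous_pow j)).intervalIntegrable _ _ :
        IntervalIntegrable (fun u : ℝ => P.coeff j * u^j) _ _ _))]
    refine Finset.sum_congr rfl fun j _ => ?_
    rw [intervalIntegral.integral_const_mul, integral_pow]
    simp [div_eq_mul_inv]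
  -- sum swap
  have hswap : ∑ b ∈ Finset.Icc 1 ⌊y⌋₊, (Λ b / b) * P.eval (Real.log (y / b) / L)
      = ∑ j ∈ range (n+1), P.coeff j *
          ∑ b ∈ Finset.Icc 1 ⌊y⌋₊, (Λ b / b) * (Real.log (y / b) / L)^j := by
    have : ∀ b : ℕ, (Λ b / (b:ℝ)) * P.eval (Real.log (y / b) / L)
        = ∑ j ∈ range (n+1), P.coeff j * ((Λ b / b) * (Real.log (y / b) / L)^j) := by
      intro b
      rw [Polynomial.eval_eq_sum_range (p := P), Finset.mul_sum]
      exact Finset.sum_congr rfl fun j _ => by ring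
    rw [Finset.sum_congr rfl (fun b _ => this b), Finset.sum_comm]
    exact Finset.sum_congr rfl fun j _ => by rw [Finset.mul_sum]
  rw [hswap, hint, Finset.mul_sum, ← Finset.sum_sub_distrib]
  calc |∑ j ∈ range (n+1), (P.coeff j *
          ∑ b ∈ Finset.Icc 1 ⌊y⌋₊, (Λ b / b) * (Real.log (y / b) / L)^j
          - L * (P.coeff j / ((j:ℝ)+1)))|
      ≤ ∑ j ∈ range (n+1), |P.coeff j *
          ∑ b ∈ Finset.Icc 1 ⌊y⌋₊, (Λ b / b) * (Real.log (y / b) / L)^j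
          - L * (P.coeff j / ((j:ℝ)+1))| := Finset.abs_sum_le_sum_abs _ _
    _ ≤ ∑ j ∈ range (n+1), |P.coeff j| * 5 := by
        apply Finset.sum_le_sum
        intro j _
        have hterm : P.coeff j * ∑ b ∈ Finset.Icc 1 ⌊y⌋₊, (Λ b / b) * (Real.log (y / b) / L)^j
            - L * (P.coeff j / ((j:ℝ)+1))
            = P.coeff j * ((∑ b ∈ Finset.Icc 1 ⌊y⌋₊, (Λ b / b) * (Real.log (y / b) / L)^j)
              - L / ((j:ℝ)+1)) := by ring
        rw [hterm, abs_mul]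
        exact mul_le_mul_of_nonneg_left (Sk_norm j y hy) (abs_nonneg _)
end
end
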